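/- Let P be a finite Frobenius poset and let F = F_S ∈ (g_A(P))* (for some S ⊆ Rel(P)) be a small Frobenius functional such that U_F(P) is a filter of P, D_F(P) is an order ideal of P, and B_F(P) = ∅. Then the principal element F̂ = Σ_{p∈P} c_{p,p} E_{p,p} is diagonal, with c_{p,p} = |U_F(P)|/|P| for every p ∈ D_F(P) and c_{p,p} = −|D_F(P)|/|P| for every p ∈ U_F(P). -/

import Mathlib

/-!
Common definitions: for a finite poset `P`, identified with `{1,…,n}` via a linear
extension, represented by a relation `le` on `Fin n`, the type-A Lie poset algebra
`gA le` is the Lie subalgebra of `sl(n, ℂ)` spanned by the matrix units `E p q`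
for `p ≺ q` together with all trace-zero diagonal matrices (here realized as a
submodule of complex `n × n` matrices, which is closed under the commutator
bracket).  `gFull le` is the full Lie poset algebra `g(P)` (with all diagonal
matrices).  `FS S` is the functional `F_S = ∑_{(p,q) ∈ S} E*_{p,q}`.
-/

namespace LiePosets

noncomputable section

open scoped BigOperators

/-- Complex `n × n` matrices. -/
abbrev M (n : ℕ) : Type := Matrix (Fin n) (Fin n) ℂ

/-- The strict relation `p ≺ q` attached to a poset relation `le`. -/
def Strict {n : ℕ} (le : Fin n → Fin n → Prop) (p q : Fin n) : Prop := le p q ∧ p ≠ q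

/-- The type-A Lie poset algebra `g_A(P)`: trace-zero matrices supported on
relations of the poset (off-diagonal entries vanish off the strict relations). -/
def gA {n : ℕ} (le : Fin n → Fin n → Prop) : Submodule ℂ (M n) where
  carrier := {A | Matrix.trace A = 0 ∧ ∀ p q : Fin n, p ≠ q → ¬ le p q → A p q = 0}
  add_mem' := by
    rintro A B ⟨hA, hA'⟩ ⟨hB, hB'⟩
    exact ⟨by simp [hA, hB], fun p q h1 h2 => by
      simp [Matrix.add_apply, hA' p q h1 h2, hB' p q h1 h2]⟩
  zero_mem' := ⟨by simp, fun p q _ _ => by simp⟩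
  smul_mem' := by
    rintro c A ⟨hA, hA'⟩
    exact ⟨by simp [hA], fun p q h1 h2 => by
      simp [Matrix.smul_apply, hA' p q h1 h2]⟩

/-- The Lie poset algebra `g(P)` (all diagonal matrices allowed). -/
def gFull {n : ℕ} (le : Fin n → Fin n → Prop) : Submodule ℂ (M n) where
  carrier := {A | ∀ p q : Fin n, p ≠ q → ¬ le p q → A p q = 0}
  add_mem' := by
    rintro A B hA hB p q h1 h2
    simp [Matrix.add_apply, hA p q h1 h2, hB p q h1 h2]
  zero_mem' := fun p q _ _ => by simp
  smul_mem' := by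
    rintro c A hA p q h1 h2
    simp [Matrix.smul_apply, hA p q h1 h2]

/-- The functional `F_S = ∑_{(p,q) ∈ S} E*_{p,q}` reading off the sum of the
coefficients of the matrix entries indexed by `S`. -/
def FS {n : ℕ} (S : Finset (Fin n × Fin n)) : M n →ₗ[ℂ] ℂ where
  toFun A := ∑ pq ∈ S, A pq.1 pq.2
  map_add' A B := by simp [Matrix.add_apply, Finset.sum_add_distrib]
  map_smul' c A := by simp [Matrix.smul_apply, Finset.mul_sum]

/-- `F` is a Frobenius functional on the Lie subalgebra (submodule) `g`:
the kernel of the Kirillov form `B_F(x, y) = F ⁅x, y⁆` on `g` is trivial. -/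
def IsFrobeniusOn {n : ℕ} (g : Submodule ℂ (M n)) (F : M n →ₗ[ℂ] ℂ) : Prop :=
  ∀ x ∈ g, (∀ y ∈ g, F ⁅x, y⁆ = 0) → x = 0

/-- `H` is a principal element for `F` on `g`:  `B_F(H, ·) = F` on `g`. -/
def IsPrincipal {n : ℕ} (g : Submodule ℂ (M n)) (F : M n →ₗ[ℂ] ℂ) (H : M n) : Prop :=
  H ∈ g ∧ ∀ y ∈ g, F ⁅H, y⁆ = F y

/-- The adjoint action `ad H = ⁅H, -⁆` as a linear endomorphism of matrices. -/
def adE {n : ℕ} (H : M n) : Module.End ℂ (M n) :=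
  LinearMap.mulLeft ℂ H - LinearMap.mulRight ℂ H

/-- Multiplicity of `μ` as an eigenvalue of `ad H` acting on `g`. -/
def eigMult {n : ℕ} (g : Submodule ℂ (M n)) (H : M n) (μ : ℂ) : ℕ :=
  Module.finrank ℂ ↥(g ⊓ Module.End.eigenspace (adE H) μ)

/-- `g` has a binary spectrum: for any Frobenius functional `F` and corresponding
principal element `H`, the multiset of eigenvalues of `ad H` on `g` consists of an
equal number of `0`'s and `1`'s. -/
def HasBinarySpectrum {n : ℕ} (g : Submodule ℂ (M n)) : Prop :=
  ∀ (F : M n →ₗ[ℂ] ℂ) (H : M n), IsFrobeniusOn g F → IsPrincipal g F H →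
    eigMult g H 0 = eigMult g H 1 ∧
    eigMult g H 0 + eigMult g H 1 = Module.finrank ℂ ↥g

/-- The kernel of the Kirillov form `B_F` on `g`. -/
def kirKer {n : ℕ} (g : Submodule ℂ (M n)) (F : M n →ₗ[ℂ] ℂ) : Submodule ℂ (M n) where
  carrier := {x | x ∈ g ∧ ∀ y ∈ g, F ⁅x, y⁆ = 0}
  zero_mem' := ⟨g.zero_mem, fun y _ => by simp only [Ring.lie_def]; simp⟩
  add_mem' := by
    rintro a b ⟨ha, ha'⟩ ⟨hb, hb'⟩
    exact ⟨g.add_mem ha hb, fun y hy => by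
      have h1 := ha' y hy; have h2 := hb' y hy
      simp only [Ring.lie_def] at h1 h2 ⊢
      rw [add_mul, mul_add, map_sub, map_add, map_add]
      rw [map_sub] at h1 h2
      linear_combination h1 + h2⟩
  smul_mem' := by
    rintro c a ⟨ha, ha'⟩
    exact ⟨g.smul_mem c ha, fun y hy => by
      have h1 := ha' y hy
      simp only [Ring.lie_def] at h1 ⊢
      rw [smul_mul_assoc, mul_smul_comm, ← smul_sub, map_smul, h1, smul_zero]⟩

/-- The index of the Lie algebra `g`: the minimum over all functionals of the
dimension of the kernel of the corresponding Kirillov form. -/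
def lieIndex {n : ℕ} (g : Submodule ℂ (M n)) : ℕ :=
  sInf {d : ℕ | ∃ F : M n →ₗ[ℂ] ℂ, d = Module.finrank ℂ ↥(kirKer g F)}

/-- The underlying undirected graph of the directed graph `Γ_{F_S}`. -/
def gammaGraph {n : ℕ} (S : Finset (Fin n × Fin n)) : SimpleGraph (Fin n) where
  Adj p q := p ≠ q ∧ ((p, q) ∈ S ∨ (q, p) ∈ S)
  symm := ⟨fun p q h => ⟨h.1.symm, h.2.symm⟩⟩
  loopless := ⟨fun p h => h.1 rfl⟩

/-- `F_S` is small: `S` consists of strict relations of the poset and `Γ_{F_S}`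
is a spanning tree of the comparability graph. -/
def Small {n : ℕ} (le : Fin n → Fin n → Prop) (S : Finset (Fin n × Fin n)) : Prop :=
  (∀ pq ∈ S, Strict le pq.1 pq.2) ∧ (gammaGraph S).IsTree

/-- `U_{F_S}(P)`: the sinks of `Γ_{F_S}`. -/
def sinks {n : ℕ} (S : Finset (Fin n × Fin n)) : Set (Fin n) :=
  {p | (∃ q, (q, p) ∈ S) ∧ ∀ q, (p, q) ∉ S}

/-- `D_{F_S}(P)`: the sources of `Γ_{F_S}`. -/
def sources {n : ℕ} (S : Finset (Fin n × Fin n)) : Set (Fin n) :=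
  {p | (∃ q, (p, q) ∈ S) ∧ ∀ q, (q, p) ∉ S}

/-- `B_{F_S}(P)`: the vertices of `Γ_{F_S}` that are neither sinks nor sources. -/
def betweens {n : ℕ} (S : Finset (Fin n × Fin n)) : Set (Fin n) :=
  {p | (∃ q, (p, q) ∈ S) ∧ ∃ q, (q, p) ∈ S}

/-- `U` is a filter (up-closed set) of the poset. -/
def IsPosetFilter {n : ℕ} (le : Fin n → Fin n → Prop) (U : Set (Fin n)) : Prop :=
  ∀ p ∈ U, ∀ q, le p q → q ∈ U

/-- `D` is an order ideal (down-closed set) of the poset. -/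
def IsPosetIdeal {n : ℕ} (le : Fin n → Fin n → Prop) (D : Set (Fin n)) : Prop :=
  ∀ p ∈ D, ∀ q, le q p → q ∈ D

/-- Helper to build elements of `Fin n` from natural numbers. -/
def fmk (n : ℕ) (h : 0 < n) (i : ℕ) : Fin n := ⟨i % n, Nat.mod_lt _ h⟩

/-- Restriction of a matrix along an embedding of index types. -/
def restrictMat {N K : ℕ} (f : Fin K → Fin N) (B : M N) : M K :=
  Matrix.of fun p q => B (f p) (f q)

lemma FS_apply {n : ℕ} (S : Finset (Fin n × Fin n)) (A : M n) :
    FS S A = ∑ pq ∈ S, A pq.1 pq.2 := rfl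

/-- for a finite Frobenius poset `P` and a small Frobenius functional
`F = F_S` with `U_F(P)` a filter, `D_F(P)` an order ideal and `B_F(P) = ∅`, the
principal element `F̂` is diagonal, with diagonal entry `|U_F(P)|/|P|` on
`D_F(P)` and `-|D_F(P)|/|P|` on `U_F(P)`. -/
theorem principal_element_of_small_frobenius_functional
    (n : ℕ) (le : Fin n → Fin n → Prop)
    (hrefl : ∀ p, le p p)
    (hantisymm : ∀ p q, le p q → le q p → p = q)
    (htrans : ∀ p q r, le p q → le q r → le p r)
    (hlin : ∀ p q, le p q → p ≤ q)
    (hFrobPoset : ∃ G : M n →ₗ[ℂ] ℂ, IsFrobeniusOn (gA le) G)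
    (S : Finset (Fin n × Fin n))
    (hsmall : Small le S)
    (hFrob : IsFrobeniusOn (gA le) (FS S))
    (hU : IsPosetFilter le (sinks S))
    (hD : IsPosetIdeal le (sources S))
    (hB : betweens S = ∅) :
    ∀ H : M n, IsPrincipal (gA le) (FS S) H →
      (∀ p q, p ≠ q → H p q = 0) ∧
      (∀ p ∈ sources S, H p p = ((sinks S).ncard : ℂ) / (n : ℂ)) ∧
      (∀ p ∈ sinks S, H p p = -(((sources S).ncard : ℂ) / (n : ℂ))) := by
  classical
  intro H hH
  by_cases hS : S = ∅
  · -- In this degenerate case F = 0 and H = 0.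
    subst hS
    have hH0 : H = 0 := by
      refine hFrob H hH.1 (fun y hy => ?_)
      rw [hH.2 y hy, FS_apply]
      simp
    subst hH0
    refine ⟨fun p q _ => rfl, ?_, ?_⟩
    · rintro p ⟨⟨q, hq⟩, -⟩; simp at hq
    · rintro p ⟨⟨q, hq⟩, -⟩; simp at hq
  · -- Main case: S nonempty.
    -- basic structure of Γ_F with B_F = ∅
    have hsrc : ∀ p q : Fin n, (p, q) ∈ S → p ∈ sources S := by
      intro p q hpq
      refine ⟨⟨q, hpq⟩, fun r hr => ?_⟩
      have hbet : p ∈ betweens S := ⟨⟨q, hpq⟩, ⟨r, hr⟩⟩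
      rw [hB] at hbet; exact hbet
    have hsink : ∀ p q : Fin n, (p, q) ∈ S → q ∈ sinks S := by
      intro p q hpq
      refine ⟨⟨p, hpq⟩, fun r hr => ?_⟩
      have hbet : q ∈ betweens S := ⟨⟨r, hr⟩, ⟨p, hpq⟩⟩
      rw [hB] at hbet; exact hbet
    have hdisj : ∀ p : Fin n, p ∈ sources S → p ∈ sinks S → False := by
      rintro p ⟨-, hno⟩ ⟨⟨q, hq⟩, -⟩
      exact hno q hq
    obtain ⟨⟨p₀, q₀⟩, hp₀⟩ := Finset.nonempty_iff_ne_empty.2 hS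
    have hnepts : p₀ ≠ q₀ := (hsmall.1 _ hp₀).2
    -- every vertex is a source or a sink (connectivity of the spanning tree)
    have hcover : ∀ p : Fin n, p ∈ sources S ∨ p ∈ sinks S := by
      intro p
      have hq : ∃ q : Fin n, q ≠ p := by
        by_cases h : p = p₀
        · exact ⟨q₀, fun hc => hnepts (h ▸ hc.symm)⟩
        · exact ⟨p₀, fun hc => h hc.symm⟩
      obtain ⟨q, hqp⟩ := hq
      have hreach : (gammaGraph S).Reachable p q := hsmall.2.isConnected.preconnected p q
      obtain ⟨w⟩ := hreach
      cases w with
      | nil => exact absurd rfl hqp.symm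
      | cons h w' =>
        have h' : p ≠ _ ∧ ((p, _) ∈ S ∨ (_, p) ∈ S) := h
        rcases h'.2 with h1 | h1
        · exact Or.inl (hsrc _ _ h1)
        · exact Or.inr (hsink _ _ h1)
    -- cardinalities
    have hfilt1 : (Finset.univ.filter (fun p : Fin n => p ∈ sources S)).card
        = (sources S).ncard := by
      rw [Set.ncard_eq_toFinset_card']
      congr 1
      ext p
      simp [Set.mem_toFinset]
    have hfilt2 : (Finset.univ.filter (fun p : Fin n => ¬ p ∈ sources S)).card
        = (sinks S).ncard := by
      rw [Set.ncard_eq_toFinset_card']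
      congr 1
      ext p
      simp only [Finset.mem_filter, Finset.mem_univ, true_and, Set.mem_toFinset]
      constructor
      · intro hp; rcases hcover p with h | h
        · exact absurd h hp
        · exact h
      · intro hp hp'; exact hdisj p hp' hp
    have hcardn : (sources S).ncard + (sinks S).ncard = n := by
      rw [← hfilt1, ← hfilt2, Finset.card_filter_add_card_filter_not]
      simp
    have hnpos : n ≠ 0 := fun h => (h ▸ p₀ : Fin 0).elim0
    have hnC : ((n : ℂ)) ≠ 0 := Nat.cast_ne_zero.2 hnpos
    have hcardC : ((sources S).ncard : ℂ) + ((sinks S).ncard : ℂ) = (n : ℂ) := by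
      rw [← Nat.cast_add, hcardn]
    -- the candidate diagonal matrix
    set d : Fin n → ℂ := fun p =>
      if p ∈ sources S then ((sinks S).ncard : ℂ) / (n : ℂ)
      else -(((sources S).ncard : ℂ) / (n : ℂ)) with hd
    have htr : ∑ i : Fin n, d i = 0 := by
      rw [hd]
      rw [Finset.sum_ite, Finset.sum_const, Finset.sum_const, hfilt1, hfilt2]
      simp only [nsmul_eq_mul]
      field_simp
      ring
    have hmem : Matrix.diagonal d ∈ gA le := by
      refine ⟨?_, fun p q hpq _ => Matrix.diagonal_apply_ne d hpq⟩
      rw [Matrix.trace_diagonal]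
      exact htr
    have hbr : ∀ y : M n, FS S ⁅Matrix.diagonal d, y⁆ = FS S y := by
      intro y
      rw [FS_apply, FS_apply]
      refine Finset.sum_congr rfl ?_
      rintro ⟨p, q⟩ hpq
      have hp : p ∈ sources S := hsrc p q hpq
      have hq : q ∉ sources S := fun h => hdisj q h (hsink p q hpq)
      have : (⁅Matrix.diagonal d, y⁆ : M n) p q = (d p - d q) * y p q := by
        rw [Ring.lie_def]
        simp [Matrix.sub_apply, Matrix.diagonal_mul, Matrix.mul_diagonal]
        ring
      rw [this, hd]
      simp only [hp, hq, if_pos, if_neg, if_true, if_false]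
      have hcoef : ((sinks S).ncard : ℂ) / (n : ℂ) - -(((sources S).ncard : ℂ) / (n : ℂ))
          = 1 := by
        field_simp
        rw [sub_neg_eq_add, add_comm]
        exact hcardC
      rw [hcoef, one_mul]
    have hprin0 : IsPrincipal (gA le) (FS S) (Matrix.diagonal d) :=
      ⟨hmem, fun y _ => hbr y⟩
    -- uniqueness of the principal element
    have hzero : H - Matrix.diagonal d = 0 := by
      refine hFrob _ (Submodule.sub_mem _ hH.1 hmem) (fun y hy => ?_)
      have e : ⁅H - Matrix.diagonal d, y⁆ = ⁅H, y⁆ - ⁅Matrix.diagonal d, y⁆ := by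
        simp only [Ring.lie_def]; noncomm_ring
      rw [e, map_sub, hH.2 y hy, hprin0.2 y hy, sub_self]
    have hHeq : H = Matrix.diagonal d := by rwa [sub_eq_zero] at hzero
    subst hHeq
    refine ⟨fun p q hpq => Matrix.diagonal_apply_ne d hpq, ?_, ?_⟩
    · intro p hp
      rw [Matrix.diagonal_apply_eq, hd]
      simp [hp]
    · intro p hp
      have hp' : p ∉ sources S := fun h => hdisj p h hp
      rw [Matrix.diagonal_apply_eq, hd]
      simp [hp']

end
end LiePosets
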